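/- Let H be a finite simple graph, let L ⊆ V(H) be the set of leaves of H (vertices of degree exactly 1), let K ⊆ V(H)∖L, let L₁ = {v ∈ L : the unique neighbor of v lies in K}, and let L₂ = L∖L₁. Suppose the induced subgraph of H on V(H)∖(K ∪ L) has b connected components and b + s vertices. Then the induced subgraph of H on V(H)∖(K ∪ L₁) has at least b − s − |L₂| isolated vertices, i.e. at least b − s − |L₂| vertices of V(H)∖(K ∪ L₁) have no neighbor (in H) belonging to V(H)∖(K ∪ L₁). -/

import Mathlib

set_option linter.unusedVariables false

open Finset


/-- the isolated-vertices counting claim. -/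
theorem stmt19 {V : Type} [Fintype V] [DecidableEq V]
    (H : SimpleGraph V) [DecidableRel H.Adj]
    (L : Finset V) (hL : L = Finset.univ.filter (fun v => H.degree v = 1))
    (K : Finset V) (hK : K ⊆ Lᶜ)
    (L₁ : Finset V) (hL₁ : L₁ = L.filter (fun v => H.neighborFinset v ⊆ K))
    (L₂ : Finset V) (hL₂ : L₂ = L \ L₁)
    (b s : ℕ)
    (hb : Nat.card ((H.induce (((K ∪ L)ᶜ : Finset V) : Set V)).ConnectedComponent) = b)
    (hcard : ((K ∪ L)ᶜ : Finset V).card = b + s) :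
    (b : ℤ) - s - L₂.card ≤
      ((((K ∪ L₁)ᶜ : Finset V).filter
        (fun v => ∀ u ∈ ((K ∪ L₁)ᶜ : Finset V), ¬ H.Adj v u)).card : ℤ) := by
  classical
  set A : Finset V := (K ∪ L)ᶜ with hA
  set B : Finset V := (K ∪ L₁)ᶜ with hB
  let G := H.induce ((A : Finset V) : Set V)
  let f : ((A : Finset V) : Set V) → G.ConnectedComponent := G.connectedComponentMk
  have hbf : Fintype.card G.ConnectedComponent = b := by
    rw [← Nat.card_eq_fintype_card]; exact hb
  have hAcard : Fintype.card ((A : Finset V) : Set V) = b + s := by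
    rw [← hcard]; simp
  have hfsurj : Function.Surjective f := fun c => Quot.exists_rep c
  let fib : G.ConnectedComponent → Finset ((A : Finset V) : Set V) :=
    fun c => Finset.univ.filter (fun a => f a = c)
  have hfib1 : ∀ c, 1 ≤ (fib c).card := by
    intro c
    obtain ⟨a, ha⟩ := hfsurj c
    exact Finset.card_pos.mpr ⟨a, by simp [fib, ha]⟩
  have hsum : Fintype.card ((A : Finset V) : Set V) = ∑ c, (fib c).card := by
    rw [← Finset.card_univ]
    exact Finset.card_eq_sum_card_fiberwise (fun x _ => Finset.mem_univ _)
  set T := Finset.univ.filter (fun c => 2 ≤ (fib c).card) with hT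
  set S := Finset.univ.filter (fun c => ¬ 2 ≤ (fib c).card) with hS
  have hST : T.card + S.card = b := by
    rw [← hbf, ← Finset.card_univ]
    exact Finset.card_filter_add_card_filter_not _
  have key : ∀ c ∈ (Finset.univ : Finset G.ConnectedComponent),
      1 + (if 2 ≤ (fib c).card then 1 else 0) ≤ (fib c).card := by
    intro c _
    by_cases h : 2 ≤ (fib c).card <;> simp [h, hfib1 c]
  have hTs : b + T.card ≤ b + s := by
    have h1 : b + T.card ≤ ∑ c, (fib c).card := by
      have hle : ∑ c : G.ConnectedComponent, (1 + if 2 ≤ (fib c).card then 1 else 0)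
          ≤ ∑ c, (fib c).card := Finset.sum_le_sum key
      calc b + T.card
          = ∑ c : G.ConnectedComponent, 1
            + ∑ c : G.ConnectedComponent, (if 2 ≤ (fib c).card then 1 else 0) := by
            rw [Finset.sum_const, smul_eq_mul, mul_one, Finset.card_univ, hbf,
              ← Finset.card_filter]
        _ = ∑ c : G.ConnectedComponent, (1 + if 2 ≤ (fib c).card then 1 else 0) :=
            (Finset.sum_add_distrib).symm
        _ ≤ _ := hle
    rw [← hsum, hAcard] at h1
    exact h1
  let Iso' : Finset ((A : Finset V) : Set V) := Finset.univ.filter (fun v => ∀ u, ¬ G.Adj v u)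
  have hSIso : S.card ≤ Iso'.card := by
    apply Finset.card_le_card_of_surjOn f
    intro c hc
    rw [Finset.mem_coe, hS, Finset.mem_filter] at hc
    have h1 : (fib c).card = 1 := le_antisymm (by omega) (hfib1 c)
    obtain ⟨a, ha⟩ := Finset.card_eq_one.mp h1
    have haf : f a = c := by
      have : a ∈ fib c := by rw [ha]; exact Finset.mem_singleton_self a
      simpa [fib] using this
    refine ⟨a, ?_, haf⟩
    rw [Finset.mem_coe, Finset.mem_filter]
    refine ⟨Finset.mem_univ _, fun u hu => ?_⟩
    have hfu : f u = c := by
      rw [← haf]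
      exact (SimpleGraph.ConnectedComponent.eq).mpr hu.symm.reachable
    have hmem : u ∈ fib c := by simp [fib, hfu]
    rw [ha, Finset.mem_singleton] at hmem
    exact G.irrefl (hmem ▸ hu)
  let IsoA : Finset V := A.filter (fun v => ∀ u ∈ A, ¬ H.Adj v u)
  have hIso'A : Iso'.card ≤ IsoA.card := by
    apply Finset.card_le_card_of_injOn (fun (a : ((A : Finset V) : Set V)) => (a : V))
    · intro a ha
      rw [Finset.mem_coe, Finset.mem_filter] at ha
      rw [Finset.mem_coe, Finset.mem_filter]
      refine ⟨by exact_mod_cast a.2, fun u hu hadj => ?_⟩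
      exact ha.2 ⟨u, by exact_mod_cast hu⟩ hadj
    · exact fun x _ y _ h => Subtype.ext h
  let bad : Finset V := IsoA.filter (fun v => ∃ u ∈ L₂, H.Adj v u)
  have hbadsub : bad ⊆ IsoA := Finset.filter_subset _ _
  have hbadL₂ : bad.card ≤ L₂.card := by
    apply Finset.card_le_card_of_injOn
      (fun v => if h : ∃ u ∈ L₂, H.Adj v u then h.choose else v)
    · intro v hv
      rw [Finset.mem_coe, Finset.mem_filter] at hv
      dsimp only
      rw [dif_pos hv.2]
      exact hv.2.choose_spec.1
    · intro v1 hv1 v2 hv2 heq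
      rw [Finset.mem_coe, Finset.mem_filter] at hv1 hv2
      dsimp only at heq
      rw [dif_pos hv1.2, dif_pos hv2.2] at heq
      obtain ⟨hl1, hadj1⟩ := hv1.2.choose_spec
      obtain ⟨hl2, hadj2⟩ := hv2.2.choose_spec
      rw [heq] at hadj1
      have hdeg : H.degree hv2.2.choose = 1 := by
        have hL₂L : L₂ ⊆ L := by rw [hL₂]; exact Finset.sdiff_subset
        have hmem := hL₂L hl2
        rw [hL] at hmem; simpa using hmem
      have h1 : v1 ∈ H.neighborFinset hv2.2.choose :=
        (SimpleGraph.mem_neighborFinset _ _ _).mpr hadj1.symm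
      have h2 : v2 ∈ H.neighborFinset hv2.2.choose :=
        (SimpleGraph.mem_neighborFinset _ _ _).mpr hadj2.symm
      exact Finset.card_le_one.mp (le_of_eq hdeg) v1 h1 v2 h2
  have hsub : IsoA \ bad ⊆ B.filter (fun v => ∀ u ∈ B, ¬ H.Adj v u) := by
    intro v hv
    obtain ⟨hvIso, hvnb⟩ := Finset.mem_sdiff.mp hv
    have hvIso' := hvIso
    rw [Finset.mem_filter] at hvIso'
    obtain ⟨hvA, hviso⟩ := hvIso'
    have hvKL : v ∉ K ∪ L := by rw [hA, Finset.mem_compl] at hvA; exact hvA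
    have hvB : v ∈ B := by
      rw [hB, Finset.mem_compl]
      intro hmem
      rcases Finset.mem_union.mp hmem with h | h
      · exact hvKL (Finset.mem_union_left _ h)
      · exact hvKL (Finset.mem_union_right _ (by rw [hL₁] at h; exact (Finset.mem_filter.mp h).1))
    rw [Finset.mem_filter]
    refine ⟨hvB, fun u hu hadj => ?_⟩
    by_cases huA : u ∈ A
    · exact hviso u huA hadj
    · rw [hA, Finset.mem_compl, not_not] at huA
      rw [hB, Finset.mem_compl] at hu
      have huL : u ∈ L := by
        rcases Finset.mem_union.mp huA with h | h
        · exact absurd (Finset.mem_union_left _ h) hu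
        · exact h
      have huL₂ : u ∈ L₂ := by
        rw [hL₂, Finset.mem_sdiff]
        exact ⟨huL, fun h => hu (Finset.mem_union_right _ h)⟩
      exact hvnb (Finset.mem_filter.mpr ⟨hvIso, ⟨u, huL₂, hadj⟩⟩)
  have hsubcard : (IsoA \ bad).card ≤ (B.filter (fun v => ∀ u ∈ B, ¬ H.Adj v u)).card :=
    Finset.card_le_card hsub
  have hsd : (IsoA \ bad).card = IsoA.card - bad.card := Finset.card_sdiff_of_subset hbadsub
  have hble : bad.card ≤ IsoA.card := Finset.card_le_card hbadsub
  omega
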